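/- Let a, b, c, d be positive reals, none equal to the sum of the other three, with each less than the sum of the others. Let (θ0, φ0) with θ0 ∈ (0,π) be a zero of F(θ,φ) = a^2 e^{-iθ} + 2ab + b^2 e^{iθ} + c^2 e^{-iφ} + 2cd + d^2 e^{iφ} on the torus, and suppose not both a = b and c = d. Then the ratio F_θ(θ0,φ0)/F_φ(θ0,φ0) of the partial derivatives is not real. -/

import Mathlib

open Complex

/-- The function `F(θ,φ) = a²e^{-iθ} + 2ab + b²e^{iθ} + c²e^{-iφ} + 2cd + d²e^{iφ}`. -/
noncomputable def Fdimer (a b c d θ φ : ℝ) : ℂ :=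
  a ^ 2 * Complex.exp (-θ * Complex.I) + 2 * a * b +
    b ^ 2 * Complex.exp (θ * Complex.I) +
  c ^ 2 * Complex.exp (-φ * Complex.I) + 2 * c * d +
    d ^ 2 * Complex.exp (φ * Complex.I)

/-- The partial derivative `F_θ`. -/
noncomputable def FdimerTheta (a b c d θ φ : ℝ) : ℂ :=
  Complex.I * (-(a ^ 2) * Complex.exp (-θ * Complex.I) +
    b ^ 2 * Complex.exp (θ * Complex.I))

/-- The partial derivative `F_φ`. -/
noncomputable def FdimerPhi (a b c d θ φ : ℝ) : ℂ :=
  Complex.I * (-(c ^ 2) * Complex.exp (-φ * Complex.I) +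
    d ^ 2 * Complex.exp (φ * Complex.I))

private lemma expi (x : ℝ) :
    Complex.exp (x * Complex.I) = (Real.cos x : ℂ) + (Real.sin x : ℂ) * Complex.I := by
  rw [Complex.exp_mul_I, Complex.ofReal_cos, Complex.ofReal_sin]

private lemma expi_neg (x : ℝ) :
    Complex.exp (-x * Complex.I) = (Real.cos x : ℂ) - (Real.sin x : ℂ) * Complex.I := by
  have h : (-x : ℂ) = ((-x : ℝ) : ℂ) := by push_cast; ring
  rw [h, expi, Real.cos_neg, Real.sin_neg]
  push_cast; ring

private lemma keyN (a b c d ct st cf sf : ℝ) (ha : 0 < a) (hb : 0 < b)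
    (hc : 0 < c) (hd : 0 < d) (hct : 0 < ct) (hst : 0 < st)
    (e1 : (a+b)*ct = -((d-c)*sf)) (e2 : (b-a)*st = (c+d)*cf) :
    (b-a)*ct*((d-c)*cf) + (a+b)*st*((c+d)*sf) ≠ 0 := by
  intro hN
  have key : st*ct*((a+b)^2*(c+d)^2 - (b-a)^2*(d-c)^2) = 0 := by
    linear_combination (-(c+d)*(d-c)) * hN + (-(b-a)*(d-c)^2*ct) * e2 +
      ((a+b)*(c+d)^2*st) * e1
  have h1 : 0 < (a+b)^2*(c+d)^2 - (b-a)^2*(d-c)^2 := by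
    nlinarith [mul_pos ha hb, mul_pos hc hd, sq_nonneg (b-a), sq_nonneg (d-c)]
  nlinarith [mul_pos hst hct]

/-- Lemma `notpar`:  if each of `a,b,c,d` is strictly less than the sum of
the other three, not both `a = b` and `c = d`, and `(θ₀, φ₀)` with
`θ₀ ∈ (0, π)` is a zero of `F` on the torus, then the ratio
`F_θ(θ₀,φ₀)/F_φ(θ₀,φ₀)` is not real. -/
theorem F_partials_ratio_not_real (a b c d θ₀ φ₀ : ℝ)
    (ha : 0 < a) (hb : 0 < b) (hc : 0 < c) (hd : 0 < d)
    (h₁ : a < b + c + d) (h₂ : b < a + c + d)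
    (h₃ : c < a + b + d) (h₄ : d < a + b + c)
    (hnd : ¬(a = b ∧ c = d)) (hθ₀ : θ₀ ∈ Set.Ioo 0 Real.pi)
    (hzero : Fdimer a b c d θ₀ φ₀ = 0) :
    (FdimerTheta a b c d θ₀ φ₀ / FdimerPhi a b c d θ₀ φ₀).im ≠ 0 := by
  obtain ⟨hθ1, hθ2⟩ := hθ₀
  have hπ := Real.pi_pos
  have hct : 0 < Real.cos (θ₀/2) := Real.cos_pos_of_mem_Ioo ⟨by linarith, by linarith⟩
  have hst : 0 < Real.sin (θ₀/2) := Real.sin_pos_of_pos_of_lt_pi (by linarith) (by linarith)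
  set ct := Real.cos (θ₀/2) with hct_def
  set st := Real.sin (θ₀/2) with hst_def
  set cf := Real.cos (φ₀/2) with hcf_def
  set sf := Real.sin (φ₀/2) with hsf_def
  have hpt : st^2 + ct^2 = 1 := Real.sin_sq_add_cos_sq (θ₀/2)
  have hpf : sf^2 + cf^2 = 1 := Real.sin_sq_add_cos_sq (φ₀/2)
  have hptC : (st:ℂ)^2 + (ct:ℂ)^2 = 1 := by exact_mod_cast hpt
  have hpfC : (sf:ℂ)^2 + (cf:ℂ)^2 = 1 := by exact_mod_cast hpf
  have hcosθ : Real.cos θ₀ = ct^2 - st^2 := by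
    rw [show θ₀ = 2*(θ₀/2) by ring, Real.cos_two_mul]
    rw [hct_def, hst_def]; nlinarith [Real.sin_sq_add_cos_sq (θ₀/2)]
  have hsinθ : Real.sin θ₀ = 2*st*ct := by
    rw [show θ₀ = 2*(θ₀/2) by ring, Real.sin_two_mul]
  have hcosφ : Real.cos φ₀ = cf^2 - sf^2 := by
    rw [show φ₀ = 2*(φ₀/2) by ring, Real.cos_two_mul]
    rw [hcf_def, hsf_def]; nlinarith [Real.sin_sq_add_cos_sq (φ₀/2)]
  have hsinφ : Real.sin φ₀ = 2*sf*cf := by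
    rw [show φ₀ = 2*(φ₀/2) by ring, Real.sin_two_mul]
  set A : ℂ := (((a+b)*ct : ℝ) : ℂ) + (((b-a)*st : ℝ) : ℂ) * I with hA_def
  set B : ℂ := (((c+d)*cf : ℝ) : ℂ) + (((d-c)*sf : ℝ) : ℂ) * I with hB_def
  set A' : ℂ := (((b-a)*ct : ℝ) : ℂ) + (((a+b)*st : ℝ) : ℂ) * I with hA'_def
  set B' : ℂ := (((d-c)*cf : ℝ) : ℂ) + (((c+d)*sf : ℝ) : ℂ) * I with hB'_def
  have hA're : A'.re = (b-a)*ct := by rw [hA'_def]; simp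
  have hA'im : A'.im = (a+b)*st := by rw [hA'_def]; simp
  have hB're : B'.re = (d-c)*cf := by rw [hB'_def]; simp
  have hB'im : B'.im = (c+d)*sf := by rw [hB'_def]; simp
  have hFθ : FdimerTheta a b c d θ₀ φ₀ = I * A * A' := by
    rw [FdimerTheta, expi, expi_neg, hA_def, hA'_def, hcosθ, hsinθ]
    push_cast
    linear_combination (-((b:ℂ)^2-(a:ℂ)^2) * (st:ℂ)^2 * I) * Complex.I_sq
  have hFφ : FdimerPhi a b c d θ₀ φ₀ = I * B * B' := by
    rw [FdimerPhi, expi, expi_neg, hB_def, hB'_def, hcosφ, hsinφ]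
    push_cast
    linear_combination (-((d:ℂ)^2-(c:ℂ)^2) * (sf:ℂ)^2 * I) * Complex.I_sq
  have hF : Fdimer a b c d θ₀ φ₀ = A^2 + B^2 := by
    rw [Fdimer, expi, expi, expi_neg, expi_neg, hA_def, hB_def, hcosθ, hsinθ, hcosφ, hsinφ]
    push_cast
    linear_combination (-((b:ℂ)-a)^2*(st:ℂ)^2 - ((d:ℂ)-c)^2*(sf:ℂ)^2) * Complex.I_sq +
      (-2*(a:ℂ)*b) * hptC + (-2*(c:ℂ)*d) * hpfC
  have hzero' : A^2 + B^2 = 0 := by rw [← hF]; exact hzero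
  have hfact : (A + I*B) * (A - I*B) = 0 := by
    linear_combination hzero' + (-(B^2)) * Complex.I_sq
  have habct : 0 < (a+b)*ct := by positivity
  rcases mul_eq_zero.mp hfact with h | h
  · -- A = -I*B : (a+b)ct = (d-c)sf, (b-a)st = -((c+d)cf)
    have e1 : (a+b)*ct - (d-c)*sf = 0 := by
      have h' := congrArg Complex.re h
      rw [hA_def, hB_def] at h'
      simp at h'; linarith
    have e2 : (b-a)*st + (c+d)*cf = 0 := by
      have h' := congrArg Complex.im h
      rw [hA_def, hB_def] at h'
      simpa using h'
    have key := keyN a b c d ct st (-cf) (-sf) ha hb hc hd hct hst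
      (by linarith) (by linarith)
    have hdcsf : (d-c)*sf ≠ 0 := by intro h0; rw [h0] at e1; linarith
    have hsf_ne : sf ≠ 0 := fun h0 => hdcsf (by rw [h0]; ring)
    have hBne : B ≠ 0 := by
      intro h0
      have himB : B.im = 0 := by rw [h0]; simp
      rw [hB_def] at himB
      simp only [Complex.add_im, Complex.ofReal_im, Complex.mul_im, Complex.ofReal_re,
        Complex.I_im, Complex.I_re] at himB
      apply hdcsf
      linarith [himB]
    have hB'ne : B' ≠ 0 := by
      intro h0
      have himB : B'.im = 0 := by rw [h0]; simp
      rw [hB'_def] at himB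
      simp only [Complex.add_im, Complex.ofReal_im, Complex.mul_im, Complex.ofReal_re,
        Complex.I_im, Complex.I_re] at himB
      have hcd : 0 < c + d := by linarith
      have : (c+d)*sf ≠ 0 := mul_ne_zero (ne_of_gt hcd) hsf_ne
      apply this; linarith [himB]
    have hAeq : A = -(I*B) := by linear_combination h
    have hden : I*B*B' ≠ 0 := mul_ne_zero (mul_ne_zero Complex.I_ne_zero hBne) hB'ne
    have hratio : FdimerTheta a b c d θ₀ φ₀ / FdimerPhi a b c d θ₀ φ₀
        = (-(I*A')) / B' := by
      rw [hFθ, hFφ, hAeq, div_eq_div_iff hden hB'ne]; ring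
    rw [hratio, Complex.div_im]
    have hnsq : 0 < Complex.normSq B' := Complex.normSq_pos.mpr hB'ne
    have hnum : A'.re*B'.re + A'.im*B'.im ≠ 0 := by
      rw [hA're, hA'im, hB're, hB'im]
      intro h0
      apply key
      linear_combination -h0
    have hrw : (-(I*A')).im * B'.re / Complex.normSq B' -
        (-(I*A')).re * B'.im / Complex.normSq B'
        = -((A'.re*B'.re + A'.im*B'.im) / Complex.normSq B') := by
      simp only [Complex.neg_im, Complex.neg_re, Complex.mul_im, Complex.mul_re,
        Complex.I_re, Complex.I_im]
      ring
    rw [hrw]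
    exact neg_ne_zero.mpr (div_ne_zero hnum (ne_of_gt hnsq))
  · -- A = I*B : (a+b)ct = -((d-c)sf), (b-a)st = (c+d)cf
    have e1 : (a+b)*ct + (d-c)*sf = 0 := by
      have h' := congrArg Complex.re h
      rw [hA_def, hB_def] at h'
      simpa using h'
    have e2 : (b-a)*st - (c+d)*cf = 0 := by
      have h' := congrArg Complex.im h
      rw [hA_def, hB_def] at h'
      simpa using h'
    have key := keyN a b c d ct st cf sf ha hb hc hd hct hst
      (by linarith) (by linarith)
    have hdcsf : (d-c)*sf ≠ 0 := by intro h0; rw [h0] at e1; linarith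
    have hsf_ne : sf ≠ 0 := fun h0 => hdcsf (by rw [h0]; ring)
    have hBne : B ≠ 0 := by
      intro h0
      have himB : B.im = 0 := by rw [h0]; simp
      rw [hB_def] at himB
      simp only [Complex.add_im, Complex.ofReal_im, Complex.mul_im, Complex.ofReal_re,
        Complex.I_im, Complex.I_re] at himB
      apply hdcsf
      linarith [himB]
    have hB'ne : B' ≠ 0 := by
      intro h0
      have himB : B'.im = 0 := by rw [h0]; simp
      rw [hB'_def] at himB
      simp only [Complex.add_im, Complex.ofReal_im, Complex.mul_im, Complex.ofReal_re,
        Complex.I_im, Complex.I_re] at himB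
      have hcd : 0 < c + d := by linarith
      have : (c+d)*sf ≠ 0 := mul_ne_zero (ne_of_gt hcd) hsf_ne
      apply this; linarith [himB]
    have hAeq : A = I*B := by linear_combination h
    have hden : I*B*B' ≠ 0 := mul_ne_zero (mul_ne_zero Complex.I_ne_zero hBne) hB'ne
    have hratio : FdimerTheta a b c d θ₀ φ₀ / FdimerPhi a b c d θ₀ φ₀
        = (I*A') / B' := by
      rw [hFθ, hFφ, hAeq, div_eq_div_iff hden hB'ne]; ring
    rw [hratio, Complex.div_im]
    have hnsq : 0 < Complex.normSq B' := Complex.normSq_pos.mpr hB'ne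
    have hnum : A'.re*B'.re + A'.im*B'.im ≠ 0 := by
      rw [hA're, hA'im, hB're, hB'im]
      intro h0
      apply key
      linear_combination h0
    have hrw : (I*A').im * B'.re / Complex.normSq B' -
        (I*A').re * B'.im / Complex.normSq B'
        = (A'.re*B'.re + A'.im*B'.im) / Complex.normSq B' := by
      simp only [Complex.mul_im, Complex.mul_re, Complex.I_re, Complex.I_im]
      ring
    rw [hrw]
    exact div_ne_zero hnum (ne_of_gt hnsq)
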